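/- Suppose the growth function is f(k) = 2k − 1. Then for every d ≥ 1 and μ ≥ 0, the cardinality of the nested Smolyak grid is N(d,μ) = Σ_{k=0}^{min(d,μ)} C(μ,k) · C(μ+d−k, μ). -/

import Mathlib

/-- Multi-indices `i : Fin d → ℕ` with `i k ≥ 1` for all `k` and `∑ k, i k = d + μ`. -/
def smolyakIndices (d μ : ℕ) : Finset (Fin d → ℕ) :=
  (Fintype.piFinset fun _ => Finset.Icc 1 (d + μ)).filter fun i => ∑ k, i k = d + μ

/-- The Smolyak grid `Γ(d, μ)` based on the node sets `S`. -/
noncomputable def smolyakGrid (S : ℕ → Finset ℝ) (d μ : ℕ) : Finset (Fin d → ℝ) :=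
  (smolyakIndices d μ).biUnion fun i => Fintype.piFinset fun k => S (i k)

/-- `N(d, μ)`: the number of nodes in the Smolyak grid. -/
noncomputable def smolyakCard (S : ℕ → Finset ℝ) (d μ : ℕ) : ℕ :=
  (smolyakGrid S d μ).card


open Finset

/-- weight: 1 if zero else 2 -/
def smolW (m : ℕ) : ℕ := if m = 0 then 1 else 2

/-- exact-sum weighted count -/
def smolE (d n : ℕ) : ℕ := ∑ m ∈ Finset.Nat.antidiagonalTuple d n, ∏ k, smolW (m k)

/-- cumulative weighted count -/
def smolA (d n : ℕ) : ℕ := ∑ s ∈ Finset.range (n + 1), smolE d s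

lemma smolE_zero_succ (n : ℕ) : smolE 0 (n + 1) = 0 := by
  simp [smolE, Finset.Nat.antidiagonalTuple_zero_succ]

lemma smolE_zero_right (d : ℕ) : smolE d 0 = 1 := by
  simp [smolE, Finset.Nat.antidiagonalTuple_zero_right, smolW]

lemma smolA_zero_left (n : ℕ) : smolA 0 n = 1 := by
  induction n with
  | zero => simp [smolA, smolE_zero_right]
  | succ n ih =>
    rw [smolA, Finset.sum_range_succ, ← smolA, ih, smolE_zero_succ]

lemma smolA_zero_right (d : ℕ) : smolA d 0 = 1 := by
  simp [smolA, smolE_zero_right]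

lemma smolA_succ_right (d n : ℕ) : smolA d (n + 1) = smolA d n + smolE d (n + 1) :=
  Finset.sum_range_succ _ _

/-- splitting off the first coordinate -/
lemma smolE_succ (d n : ℕ) :
    smolE (d + 1) n = ∑ ab ∈ Finset.HasAntidiagonal.antidiagonal n, smolW ab.1 * smolE d ab.2 := by
  rw [smolE]
  have key : ∀ ab ∈ Finset.HasAntidiagonal.antidiagonal n, smolW ab.1 * smolE d ab.2 =
      ∑ m ∈ Finset.Nat.antidiagonalTuple d ab.2, smolW ab.1 * ∏ k, smolW (m k) := by
    intro ab _; rw [smolE, Finset.mul_sum]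
  rw [Finset.sum_congr rfl key, Finset.sum_sigma']
  refine Finset.sum_nbij'
    (fun m => (⟨(m 0, ∑ k, m (Fin.succ k)), fun k => m (Fin.succ k)⟩ :
      (_ : ℕ × ℕ) × (Fin d → ℕ)))
    (fun p => Fin.cons p.1.1 p.2) ?_ ?_ ?_ ?_ ?_
  · intro m hm
    simp only [Finset.Nat.mem_antidiagonalTuple] at hm
    simp only [Finset.mem_sigma, Finset.HasAntidiagonal.mem_antidiagonal,
      Finset.Nat.mem_antidiagonalTuple]
    exact ⟨by rw [← hm, Fin.sum_univ_succ], trivial⟩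
  · rintro ⟨⟨a, b⟩, m⟩ hp
    simp only [Finset.mem_sigma, Finset.HasAntidiagonal.mem_antidiagonal,
      Finset.Nat.mem_antidiagonalTuple] at hp ⊢
    rw [Fin.sum_cons, hp.2, hp.1]
  · intro m _
    exact Fin.cons_self_tail m
  · rintro ⟨⟨a, b⟩, m⟩ hp
    simp only [Finset.mem_sigma, Finset.HasAntidiagonal.mem_antidiagonal,
      Finset.Nat.mem_antidiagonalTuple] at hp
    have h2 : (∑ k, (Fin.cons a m : Fin (d+1) → ℕ) (Fin.succ k)) = b := by
      simp only [Fin.cons_succ]; exact hp.2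
    simp [Fin.cons_zero, Fin.cons_succ, h2]
    exact hp.2
  · intro m _
    rw [Fin.prod_univ_succ]

lemma smolA_succ (d n : ℕ) : smolA (d + 1) n = smolA d n + 2 * ∑ s ∈ Finset.range n, smolA d s := by
  induction n with
  | zero => simp [smolA_zero_right]
  | succ n ih =>
    rw [smolA_succ_right, ih, smolE_succ]
    rw [Finset.Nat.sum_antidiagonal_eq_sum_range_succ_mk]
    rw [Finset.sum_range_succ']
    have h0 : smolW 0 * smolE d (n + 1 - 0) = smolE d (n + 1) := by simp [smolW]
    have h1 : ∀ i ∈ Finset.range (n + 1), smolW (i + 1) * smolE d (n + 1 - (i + 1)) =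
        2 * smolE d (n - i) := by intro i _; simp [smolW]
    rw [Finset.sum_congr rfl h1, h0]
    have hrefl : ∑ i ∈ Finset.range (n + 1), smolE d (n - i)
        = ∑ i ∈ Finset.range (n + 1), smolE d i := by
      have := Finset.sum_range_reflect (fun s => smolE d s) (n + 1)
      simpa using this
    have h2 : ∑ i ∈ Finset.range (n + 1), 2 * smolE d (n - i) = 2 * smolA d n := by
      rw [← Finset.mul_sum, hrefl, smolA]
    rw [h2, smolA_succ_right, Finset.sum_range_succ]
    ring

/-- the Delannoy recurrence -/
lemma smolA_rec (d n : ℕ) :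
    smolA (d + 1) (n + 1) = smolA d (n + 1) + smolA (d + 1) n + smolA d n := by
  have h1 := smolA_succ d (n + 1)
  have h2 := smolA_succ d n
  rw [Finset.sum_range_succ] at h1
  omega

/-- the binomial-sum side -/
def smolB (d n : ℕ) : ℕ := ∑ k ∈ Finset.range (n + 1), n.choose k * (n + d - k).choose n

lemma smolB_eq_min (d n : ℕ) :
    smolB d n = ∑ k ∈ Finset.range (min d n + 1), n.choose k * (n + d - k).choose n := by
  rw [smolB]
  refine (Finset.sum_subset ?_ ?_).symm
  · intro k hk
    rw [Finset.mem_range] at hk ⊢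
    omega
  · intro k hk hk'
    rw [Finset.mem_range] at hk
    rw [Finset.mem_range, not_lt] at hk'
    have hd : d < k := by omega
    have : n + d - k < n := by omega
    rw [Nat.choose_eq_zero_of_lt this, mul_zero]

lemma smolB_zero_left (n : ℕ) : smolB 0 n = 1 := by
  rw [smolB]
  rw [Finset.sum_eq_single_of_mem 0 (by simp)]
  · simp
  · intro k hk hk0
    rw [Finset.mem_range] at hk
    have : n + 0 - k < n := by omega
    rw [Nat.choose_eq_zero_of_lt this, mul_zero]

lemma smolB_zero_right (d : ℕ) : smolB d 0 = 1 := by simp [smolB]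

lemma smolB_rec (d n : ℕ) :
    smolB (d + 1) (n + 1) = smolB d (n + 1) + smolB (d + 1) n + smolB d n := by
  have pascal1 : ∀ k ∈ Finset.range (n + 2),
      (n+1).choose k * (n + 1 + (d+1) - k).choose (n+1) =
      (n+1).choose k * (n + d + 1 - k).choose (n+1)
        + (n+1).choose k * (n + d + 1 - k).choose n := by
    intro k hk
    rw [Finset.mem_range] at hk
    have h1 : n + 1 + (d + 1) - k = (n + d + 1 - k) + 1 := by omega
    rw [h1, Nat.choose_succ_succ, Nat.succ_eq_add_one, mul_add]
    exact add_comm _ _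
  have step1 : smolB (d+1) (n+1) = smolB d (n+1)
      + ∑ k ∈ Finset.range (n + 2), (n+1).choose k * (n + d + 1 - k).choose n := by
    rw [smolB, Finset.sum_congr rfl pascal1, Finset.sum_add_distrib]
    congr 1
    rw [smolB]
    refine Finset.sum_congr rfl fun k hk => ?_
    rw [Finset.mem_range] at hk
    congr 2
    omega
  have step2 : ∑ k ∈ Finset.range (n + 2), (n+1).choose k * (n + d + 1 - k).choose n
      = smolB (d+1) n + smolB d n := by
    rw [Finset.sum_range_succ']
    have hsplit : ∀ i ∈ Finset.range (n + 1),
        (n+1).choose (i+1) * (n + d + 1 - (i+1)).choose n =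
        n.choose i * (n + d - i).choose n + n.choose (i+1) * (n + d - i).choose n := by
      intro i hi
      have h1 : n + d + 1 - (i + 1) = n + d - i := by omega
      rw [h1, Nat.choose_succ_succ, add_mul]
    rw [Finset.sum_congr rfl hsplit, Finset.sum_add_distrib]
    have hB1 : ∑ i ∈ Finset.range (n + 1), n.choose i * (n + d - i).choose n = smolB d n := by
      rw [smolB]
    have hY : ∑ i ∈ Finset.range (n + 1), n.choose (i+1) * (n + d - i).choose n
        = ∑ i ∈ Finset.range n, n.choose (i+1) * (n + d - i).choose n := by
      rw [Finset.sum_range_succ, Nat.choose_succ_self, zero_mul, add_zero]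
    have hB2 : smolB (d+1) n
        = ∑ i ∈ Finset.range n, n.choose (i+1) * (n + d - i).choose n
          + (n+1).choose 0 * (n + d + 1 - 0).choose n := by
      rw [smolB, Finset.sum_range_succ']
      congr 1
      · refine Finset.sum_congr rfl fun i hi => ?_
        congr 2
        omega
      · have h : n + (d + 1) = n + d + 1 := by omega
        simp [h]
    rw [hB1, hY]
    rw [hB2]
    ring
  rw [step1, step2]
  ring

lemma smolA_eq_smolB (d n : ℕ) : smolA d n = smolB d n := by
  induction d generalizing n with
  | zero => rw [smolA_zero_left, smolB_zero_left]
  | succ d ihd =>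
    induction n with
    | zero => rw [smolA_zero_right, smolB_zero_right]
    | succ n ihn => rw [smolA_rec, smolB_rec, ihd, ihd, ihn]

open Finset

section Grid

variable (S : ℕ → Finset ℝ)

/-- the set of "new" nodes at level `k` -/
noncomputable def smolD (k : ℕ) : Finset ℝ := if k ≤ 1 then S 1 else S k \ S (k - 1)

variable {S}

lemma smolS_mono (hS : ∀ k, 1 ≤ k → S k ⊆ S (k + 1)) {j k : ℕ} (hj : 1 ≤ j) (hjk : j ≤ k) :
    S j ⊆ S k := by
  induction k, hjk using Nat.le_induction with
  | base => exact Finset.Subset.refl _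
  | succ k hk ih => exact ih.trans (hS k (hj.trans hk))

lemma smolD_subset {k : ℕ} (hk : 1 ≤ k) : smolD S k ⊆ S k := by
  rw [smolD]
  split
  · next h =>
      have : k = 1 := by omega
      rw [this]
  · exact Finset.sdiff_subset

lemma smolS_cover (hS : ∀ k, 1 ≤ k → S k ⊆ S (k + 1)) {n : ℕ} (hn : 1 ≤ n) :
    S n = (Finset.Icc 1 n).biUnion (smolD S) := by
  induction n, hn using Nat.le_induction with
  | base =>
    have : Finset.Icc 1 1 = {1} := rfl
    rw [this, Finset.singleton_biUnion, smolD, if_pos le_rfl]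
  | succ n hn ih =>
    have hIcc : Finset.Icc 1 (n + 1) = insert (n + 1) (Finset.Icc 1 n) := by
      ext x; simp only [Finset.mem_Icc, Finset.mem_insert]; omega
    rw [hIcc, Finset.biUnion_insert, ← ih, smolD, if_neg (by omega)]
    have h1 : n + 1 - 1 = n := by omega
    rw [h1]
    exact (Finset.sdiff_union_of_subset (hS n hn)).symm

lemma smolD_disjoint (hS : ∀ k, 1 ≤ k → S k ⊆ S (k + 1)) {j k : ℕ} (hj : 1 ≤ j) (hjk : j < k) :
    Disjoint (smolD S j) (smolD S k) := by
  have hk2 : ¬ k ≤ 1 := by omega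
  rw [Finset.disjoint_left]
  intro x hxj hxk
  rw [smolD, if_neg hk2, Finset.mem_sdiff] at hxk
  have hsub : S j ⊆ S (k - 1) := smolS_mono hS hj (by omega)
  exact hxk.2 (hsub (smolD_subset hj hxj))

lemma smolD_card (hS : ∀ k, 1 ≤ k → S k ⊆ S (k + 1))
    (hSc : ∀ k, 1 ≤ k → (S k).card = 2 * k - 1) {k : ℕ} (hk : 1 ≤ k) :
    (smolD S k).card = smolW (k - 1) := by
  rcases Nat.lt_or_ge k 2 with h2 | h2
  · have hk1 : k = 1 := by omega
    subst hk1
    rw [smolD, if_pos le_rfl, hSc 1 le_rfl]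
    rfl
  · have hsub : S (k - 1) ⊆ S k := by
      have := hS (k - 1) (by omega)
      rwa [Nat.sub_add_cancel (by omega : 1 ≤ k)] at this
    rw [smolD, if_neg (by omega), Finset.card_sdiff_of_subset hsub, hSc k hk, hSc (k - 1) (by omega),
      smolW, if_neg (by omega)]
    omega

end Grid
def smolJ (d μ : ℕ) : Finset (Fin d → ℕ) :=
  (Fintype.piFinset fun _ => Finset.Icc 1 (d + μ)).filter fun j => ∑ k, j k ≤ d + μ

lemma mem_smolJ {d μ : ℕ} {j : Fin d → ℕ} :
    j ∈ smolJ d μ ↔ (∀ k, 1 ≤ j k ∧ j k ≤ d + μ) ∧ ∑ k, j k ≤ d + μ := by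
  rw [smolJ, Finset.mem_filter, Fintype.mem_piFinset]
  simp only [Finset.mem_Icc]

lemma smolyakGrid_eq {S : ℕ → Finset ℝ} (hS : ∀ k, 1 ≤ k → S k ⊆ S (k + 1))
    (d μ : ℕ) (hd : 1 ≤ d) :
    smolyakGrid S d μ = (smolJ d μ).biUnion fun j => Fintype.piFinset fun k => smolD S (j k) := by
  ext x
  simp only [smolyakGrid, Finset.mem_biUnion]
  constructor
  · rintro ⟨i, hi, hx⟩
    rw [smolyakIndices, Finset.mem_filter, Fintype.mem_piFinset] at hi
    obtain ⟨hi1, hi2⟩ := hi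
    have hik : ∀ k, 1 ≤ i k ∧ i k ≤ d + μ := fun k => Finset.mem_Icc.1 (hi1 k)
    rw [Fintype.mem_piFinset] at hx
    have hex : ∀ k, ∃ jk, (1 ≤ jk ∧ jk ≤ i k) ∧ x k ∈ smolD S jk := by
      intro k
      have hxk := hx k
      rw [smolS_cover hS (hik k).1] at hxk
      obtain ⟨jk, hjk, hxj⟩ := Finset.mem_biUnion.1 hxk
      exact ⟨jk, Finset.mem_Icc.1 hjk, hxj⟩
    choose j hj1 hj2 using hex
    refine ⟨j, mem_smolJ.2 ⟨fun k => ⟨(hj1 k).1, le_trans (hj1 k).2 (hik k).2⟩, ?_⟩,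
      Fintype.mem_piFinset.2 hj2⟩
    calc ∑ k, j k ≤ ∑ k, i k := Finset.sum_le_sum fun k _ => (hj1 k).2
      _ = d + μ := hi2
  · rintro ⟨j, hj, hx⟩
    obtain ⟨hj1, hj2⟩ := mem_smolJ.1 hj
    have hjk : ∀ k, 1 ≤ j k := fun k => (hj1 k).1
    rw [Fintype.mem_piFinset] at hx
    set k0 : Fin d := ⟨0, hd⟩ with hk0
    refine ⟨Function.update j k0 (j k0 + (d + μ - ∑ k, j k)), ?_, ?_⟩
    · have hij : ∀ k, j k ≤ Function.update j k0 (j k0 + (d + μ - ∑ k, j k)) k := by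
        intro k
        by_cases hk : k = k0
        · subst hk; rw [Function.update_self]; omega
        · rw [Function.update_of_ne hk]
      have hsum : ∑ k, Function.update j k0 (j k0 + (d + μ - ∑ k, j k)) k = d + μ := by
        rw [Finset.sum_update_of_mem (Finset.mem_univ k0)]
        have h := Finset.sum_eq_add_sum_sdiff_singleton_of_mem (Finset.mem_univ k0) j
        omega
      rw [smolyakIndices, Finset.mem_filter, Fintype.mem_piFinset]
      refine ⟨fun k => Finset.mem_Icc.2 ⟨le_trans (hjk k) (hij k), ?_⟩, hsum⟩
      calc Function.update j k0 (j k0 + (d + μ - ∑ k, j k)) k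
          ≤ ∑ k', Function.update j k0 (j k0 + (d + μ - ∑ k, j k)) k' :=
            Finset.single_le_sum (fun _ _ => Nat.zero_le _) (Finset.mem_univ k)
        _ = d + μ := hsum
    · rw [Fintype.mem_piFinset]
      intro k
      have hij : j k ≤ Function.update j k0 (j k0 + (d + μ - ∑ k, j k)) k := by
        by_cases hk : k = k0
        · subst hk; rw [Function.update_self]; omega
        · rw [Function.update_of_ne hk]
      exact smolS_mono hS (hjk k) hij (smolD_subset (hjk k) (hx k))

lemma smolyakCard_eq_sum {S : ℕ → Finset ℝ} (hS : ∀ k, 1 ≤ k → S k ⊆ S (k + 1))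
    (hSc : ∀ k, 1 ≤ k → (S k).card = 2 * k - 1) (d μ : ℕ) (hd : 1 ≤ d) :
    smolyakCard S d μ = ∑ j ∈ smolJ d μ, ∏ k, smolW (j k - 1) := by
  rw [smolyakCard, smolyakGrid_eq hS d μ hd, Finset.card_biUnion]
  · refine Finset.sum_congr rfl fun j hj => ?_
    rw [Fintype.card_piFinset]
    refine Finset.prod_congr rfl fun k _ => ?_
    exact smolD_card hS hSc ((mem_smolJ.1 hj).1 k).1
  · intro j hj j' hj' hne
    obtain ⟨k, hk⟩ := Function.ne_iff.1 hne
    simp only [Function.onFun]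
    rw [Finset.disjoint_left]
    intro x hxj hxj'
    rw [Fintype.mem_piFinset] at hxj hxj'
    rcases Nat.lt_or_ge (j k) (j' k) with h | h
    · exact (Finset.disjoint_left.1
        (smolD_disjoint hS ((mem_smolJ.1 hj).1 k).1 h)) (hxj k) (hxj' k)
    · have h' : j' k < j k := by omega
      exact (Finset.disjoint_left.1
        (smolD_disjoint hS ((mem_smolJ.1 hj').1 k).1 h')) (hxj' k) (hxj k)

lemma sum_smolJ (d μ : ℕ) (hd : 1 ≤ d) :
    ∑ j ∈ smolJ d μ, ∏ k, smolW (j k - 1) = smolA d μ := by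
  rw [smolA]
  simp only [smolE]
  rw [Finset.sum_sigma']
  have keysum : ∀ j : Fin d → ℕ, (∀ k, 1 ≤ j k) → ∑ k, (j k - 1) + d = ∑ k, j k := by
    intro j hjk
    have h1 : ∑ k, j k = ∑ k, ((j k - 1) + 1) :=
      Finset.sum_congr rfl fun k _ => (Nat.sub_add_cancel (hjk k)).symm
    rw [h1, Finset.sum_add_distrib, Finset.sum_const, Finset.card_univ, Fintype.card_fin,
      smul_eq_mul, mul_one]
  refine Finset.sum_nbij' (fun j => ⟨∑ k, (j k - 1), fun k => j k - 1⟩)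
    (fun p k => p.2 k + 1) ?_ ?_ ?_ ?_ ?_
  · intro j hj
    obtain ⟨hj1, hj2⟩ := mem_smolJ.1 hj
    have hks := keysum j fun k => (hj1 k).1
    refine Finset.mem_sigma.2 ⟨Finset.mem_range.2 ?_, Finset.Nat.mem_antidiagonalTuple.2 rfl⟩
    show ∑ k, (j k - 1) < μ + 1
    omega
  · rintro ⟨s, m⟩ hp
    rw [Finset.mem_sigma, Finset.mem_range, Finset.Nat.mem_antidiagonalTuple] at hp
    obtain ⟨hs, hm⟩ := hp
    dsimp only at hs hm ⊢
    refine mem_smolJ.2 ⟨fun k => ⟨Nat.le_add_left _ _, ?_⟩, ?_⟩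
    · show m k + 1 ≤ d + μ
      have h : m k ≤ ∑ k', m k' :=
        Finset.single_le_sum (fun _ _ => Nat.zero_le _) (Finset.mem_univ k)
      omega
    · show ∑ k, (m k + 1) ≤ d + μ
      have h1 : ∑ k, (m k + 1) = (∑ k, m k) + d := by
        rw [Finset.sum_add_distrib, Finset.sum_const, Finset.card_univ, Fintype.card_fin,
          smul_eq_mul, mul_one]
      omega
  · intro j hj
    obtain ⟨hj1, _⟩ := mem_smolJ.1 hj
    dsimp only
    funext k
    exact Nat.sub_add_cancel (hj1 k).1
  · rintro ⟨s, m⟩ hp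
    rw [Finset.mem_sigma, Finset.mem_range, Finset.Nat.mem_antidiagonalTuple] at hp
    dsimp only at hp ⊢
    simp only [Nat.add_sub_cancel]
    rw [hp.2]
  · intro j _
    rfl

/-- For the growth function `f(k) = 2k - 1`, the nested Smolyak grid has
`N(d, μ) = ∑_{k=0}^{min(d, μ)} C(μ, k) C(μ+d-k, μ)` nodes. -/
theorem smolyakCard_of_two_mul_sub_one
    (S : ℕ → Finset ℝ) (hS_nested : ∀ k, 1 ≤ k → S k ⊆ S (k + 1))
    (hS_card : ∀ k, 1 ≤ k → (S k).card = 2 * k - 1)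
    (d μ : ℕ) (hd : 1 ≤ d) :
    smolyakCard S d μ =
      ∑ k ∈ Finset.range (min d μ + 1), μ.choose k * (μ + d - k).choose μ := by
  rw [smolyakCard_eq_sum hS_nested hS_card d μ hd, sum_smolJ d μ hd, smolA_eq_smolB,
    smolB_eq_min]
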